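/- Let n ≥ 2 and let d be a real number with 0 < d < n−1. Let Ω ⊆ ℝ^n be a nonempty open set with Ω ≠ ℝ^n whose boundary ∂Ω is d-Ahlfors regular with constant 𝒜. Then Ω satisfies the interior corkscrew condition with a constant κ ∈ (0,1) depending only on n, d, and 𝒜. -/

import Mathlib

open MeasureTheory Metric Set ENNReal
open NNReal

noncomputable section

abbrev Eucl (n : ℕ) := EuclideanSpace ℝ (Fin n)

variable {n : ℕ}

/-- The `d`-dimensional surface measure on `Γ`: Hausdorff measure `ℋ^d` restricted to `Γ`. -/
def sMeasure (d : ℝ) (Γ : Set (Eucl n)) : Measure (Eucl n) := (μH[d]).restrict Γ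

/-- `Γ` is `d`-Ahlfors regular with constant `𝒜`, for radii `r` with `ofReal r < R`. -/
def AhlforsRegularWithin (d 𝒜 : ℝ) (Γ : Set (Eucl n)) (R : ℝ≥0∞) : Prop :=
  ∀ x ∈ Γ, ∀ r : ℝ, 0 < r → ENNReal.ofReal r < R →
    ENNReal.ofReal (𝒜⁻¹ * r ^ d) ≤ sMeasure d Γ (ball x r) ∧
      sMeasure d Γ (ball x r) ≤ ENNReal.ofReal (𝒜 * r ^ d)

/-- The interior corkscrew condition with constant `κ`. -/
def CorkscrewCond (κ : ℝ) (Ω : Set (Eucl n)) : Prop :=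
  ∀ x ∈ frontier Ω, ∀ r : ℝ, 0 < r → ENNReal.ofReal r < EMetric.diam Ω →
    ∃ z ∈ ball x r, ball z (κ * r) ⊆ Ω

/-- Positivity of the `k`-dimensional Hausdorff measure of Euclidean balls. -/
lemma muH_ball_pos (k : ℕ) (hk : 1 ≤ k) {ρ : ℝ} (hρ : 0 < ρ) :
    0 < μH[(k : ℝ)] (ball (0 : EuclideanSpace ℝ (Fin k)) ρ) := by
  have hL : LipschitzWith 1 (WithLp.equiv 2 (Fin k → ℝ)) := PiLp.lipschitzWith_ofLp 2 _
  have hAL : AntilipschitzWith _ (WithLp.equiv 2 (Fin k → ℝ)) :=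
    PiLp.antilipschitzWith_ofLp 2 (fun _ : Fin k => ℝ)
  set L := WithLp.equiv 2 (Fin k → ℝ)
  set C : ℝ≥0 := (Fintype.card (Fin k) : ℝ≥0) ^ (1 / (2:ℝ≥0∞)).toReal with hC
  have hCk : (C : ℝ) ≤ (k : ℝ) + 1 := by
    have h2 : (C : ℝ) = (k : ℝ) ^ ((1 / (2:ℝ≥0∞)).toReal) := by
      rw [hC, NNReal.coe_rpow]; norm_num
    rw [h2]
    calc (k:ℝ) ^ ((1 / (2:ℝ≥0∞)).toReal) ≤ (k:ℝ) ^ (1:ℝ) := by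
          apply Real.rpow_le_rpow_of_exponent_le
          · exact_mod_cast hk
          · rw [show (1 / (2:ℝ≥0∞)).toReal = (1/2 : ℝ) by simp [ENNReal.toReal_div]]
            norm_num
      _ = (k:ℝ) := Real.rpow_one _
      _ ≤ (k:ℝ) + 1 := by linarith
  set δ : ℝ := ρ / ((k : ℝ) + 1) with hδ
  have hδpos : 0 < δ := by positivity
  have hsub : ball (0 : Fin k → ℝ) δ ⊆ L '' (ball (0 : EuclideanSpace ℝ (Fin k)) ρ) := by
    intro y hy
    refine ⟨L.symm y, ?_, by simp⟩
    rw [mem_ball_zero_iff] at hy ⊢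
    have h0 : L (L.symm y) = y := L.apply_symm_apply y
    have hdle := hAL.le_mul_dist (L.symm y) 0
    rw [h0, (by simp [L] : L (0 : EuclideanSpace ℝ (Fin k)) = 0)] at hdle
    calc ‖L.symm y‖ = dist (L.symm y) 0 := (dist_zero_right _).symm
      _ ≤ (C : ℝ) * dist y 0 := hdle
      _ ≤ ((k:ℝ)+1) * dist y 0 := mul_le_mul_of_nonneg_right hCk dist_nonneg
      _ < ((k:ℝ)+1) * δ := by
          rw [dist_zero_right]
          exact mul_lt_mul_of_pos_left hy (by positivity)
      _ = ρ := by rw [hδ]; field_simp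
  have hvol : (μH[(k:ℝ)] : Measure (Fin k → ℝ)) = volume := by
    have h := MeasureTheory.hausdorffMeasure_pi_real (ι := Fin k)
    simpa using h
  have hpi : (0:ℝ≥0∞) < μH[(k : ℝ)] (ball (0 : Fin k → ℝ) δ) := by
    rw [hvol]
    exact measure_ball_pos _ _ hδpos
  calc (0:ℝ≥0∞) < μH[(k : ℝ)] (ball (0 : Fin k → ℝ) δ) := hpi
    _ ≤ μH[(k : ℝ)] (L '' (ball (0 : EuclideanSpace ℝ (Fin k)) ρ)) := measure_mono hsub
    _ ≤ (1:ℝ≥0) ^ ((k:ℝ)) * μH[(k : ℝ)] (ball (0 : EuclideanSpace ℝ (Fin k)) ρ) :=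
        hL.hausdorffMeasure_image_le (by positivity) _
    _ = μH[(k : ℝ)] (ball (0 : EuclideanSpace ℝ (Fin k)) ρ) := by
        rw [ENNReal.coe_one, ENNReal.one_rpow, one_mul]

/-- On bounded sets, a `d`-Ahlfors regular set has finite `μH[d]` measure. -/
lemma ahlfors_locally_finite {n : ℕ} {d 𝒜 : ℝ} (hd0 : 0 < d) {Γ : Set (Eucl n)}
    (hreg : AhlforsRegularWithin d 𝒜 Γ (EMetric.diam Γ)) (a : Eucl n) (R : ℝ) :
    μH[d] (Γ ∩ closedBall a R) < ⊤ := by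
  rcases eq_or_ne (EMetric.diam Γ) 0 with hdiam | hdiam
  · have hsub : Γ.Subsingleton := EMetric.diam_eq_zero_iff.mp hdiam
    haveI := MeasureTheory.Measure.noAtoms_hausdorff (Eucl n) hd0
    have h0 : μH[d] (Γ ∩ closedBall a R) = 0 := by
      exact (hsub.anti (inter_subset_left : Γ ∩ closedBall a R ⊆ Γ)).measure_zero
        (μH[d] : Measure (Eucl n))
    rw [h0]; exact ENNReal.zero_lt_top
  · obtain ⟨t₀, ht₀, ht₀d⟩ : ∃ t₀ : ℝ, 0 < t₀ ∧ ENNReal.ofReal t₀ < EMetric.diam Γ := by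
      rcases eq_top_or_lt_top (EMetric.diam Γ) with h | h
      · exact ⟨1, one_pos, by rw [h]; exact ofReal_lt_top⟩
      · refine ⟨(EMetric.diam Γ).toReal / 2, ?_, ?_⟩
        · have : 0 < (EMetric.diam Γ).toReal := ENNReal.toReal_pos hdiam h.ne
          linarith
        · calc ENNReal.ofReal ((EMetric.diam Γ).toReal / 2)
              < ENNReal.ofReal ((EMetric.diam Γ).toReal) := by
                apply ENNReal.ofReal_lt_ofReal_iff_of_nonneg (by positivity) |>.mpr
                have : 0 < (EMetric.diam Γ).toReal := ENNReal.toReal_pos hdiam h.ne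
                linarith
            _ = EMetric.diam Γ := ENNReal.ofReal_toReal h.ne
    have hK : TotallyBounded (Γ ∩ closedBall a R) :=
      (isCompact_closedBall a R).totallyBounded.subset inter_subset_right
    obtain ⟨t, hts, htf, htcover⟩ :=
      totallyBounded_iff_subset.mp hK _ (dist_mem_uniformity ht₀)
    have hcover : Γ ∩ closedBall a R ⊆ ⋃ y ∈ htf.toFinset, Γ ∩ ball y t₀ := by
      intro w hw
      obtain ⟨y, hy, hwy⟩ := mem_iUnion₂.mp (htcover hw)
      exact mem_iUnion₂.mpr ⟨y, htf.mem_toFinset.mpr hy, hw.1, by exact hwy⟩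
    calc μH[d] (Γ ∩ closedBall a R) ≤ μH[d] (⋃ y ∈ htf.toFinset, Γ ∩ ball y t₀) :=
          measure_mono hcover
      _ ≤ ∑ y ∈ htf.toFinset, μH[d] (Γ ∩ ball y t₀) := measure_biUnion_finset_le _ _
      _ < ⊤ := by
          apply ENNReal.sum_lt_top.mpr
          intro y hy
          have hyΓ : y ∈ Γ := (hts (htf.mem_toFinset.mp hy)).1
          have hb : μH[d] (Γ ∩ ball y t₀) = sMeasure d Γ (ball y t₀) := by
            rw [sMeasure, Measure.restrict_apply measurableSet_ball, inter_comm]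
          rw [hb]
          exact lt_of_le_of_lt ((hreg y hyΓ t₀ ht₀ ht₀d).2) ofReal_lt_top

/-- A preconnected set meeting an open set and the complement of its closure meets its frontier. -/
lemma exists_mem_frontier_of_preconnected {X : Type*} [TopologicalSpace X] {s Ω : Set X}
    (hs : IsPreconnected s) (hΩ : IsOpen Ω) (h1 : (s ∩ Ω).Nonempty)
    (h2 : (s ∩ (closure Ω)ᶜ).Nonempty) : (s ∩ frontier Ω).Nonempty := by
  by_contra h
  rw [not_nonempty_iff_eq_empty] at h
  have hsub : s ⊆ Ω ∪ (closure Ω)ᶜ := by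
    intro x hx
    by_cases hxΩ : x ∈ Ω
    · exact Or.inl hxΩ
    by_cases hxc : x ∈ closure Ω
    · exfalso
      have : x ∈ s ∩ frontier Ω := ⟨hx, hxc, by rwa [hΩ.interior_eq]⟩
      rw [h] at this; exact this
    · exact Or.inr hxc
  obtain ⟨x, hxs, hx⟩ := hs Ω (closure Ω)ᶜ hΩ isClosed_closure.isOpen_compl hsub h1 h2
  exact hx.2 (subset_closure hx.1)

/-- The complement of a domain with low-dimensional Ahlfors regular boundary has
empty interior. -/
lemma interior_compl_empty {n : ℕ} (hn : 2 ≤ n) {d 𝒜 : ℝ} (hd0 : 0 < d)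
    (hdn : d < (n:ℝ) - 1) {Ω : Set (Eucl n)} (hΩ : IsOpen Ω) (hne : Ω.Nonempty)
    (hreg : AhlforsRegularWithin d 𝒜 (frontier Ω) (EMetric.diam (frontier Ω))) :
    interior Ωᶜ = ∅ := by
  set Γ : Set (Eucl n) := frontier Ω with hΓ
  by_contra hcon
  obtain ⟨a, ha⟩ := nonempty_iff_ne_empty.mpr hcon
  obtain ⟨b, hb⟩ := hne
  set u : Eucl n := b - a with hu_def
  have hau : a + u = b := by simp [hu_def]
  have hu : u ≠ 0 := by
    intro h0
    rw [h0, add_zero] at hau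
    exact (interior_subset ha) (hau ▸ hb)
  -- radius so that both balls are inside the respective sets
  obtain ⟨ρa, hρa, hball_a⟩ := Metric.isOpen_iff.mp isOpen_interior a ha
  obtain ⟨ρb, hρb, hball_b⟩ := Metric.isOpen_iff.mp hΩ b hb
  set ρ : ℝ := min ρa ρb with hρdef
  have hρ : 0 < ρ := lt_min hρa hρb
  set W : Submodule ℝ (Eucl n) := (ℝ ∙ u)ᗮ with hW
  have huW : u ∈ Wᗮ := (Submodule.orthogonal_orthogonal (ℝ ∙ u)).symm ▸
    Submodule.mem_span_singleton_self u
  -- the projection map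
  set P := Submodule.orthogonalProjectionOnto W
  set F : Eucl n → Eucl n := fun w => (P w : Eucl n) with hF
  have hFlip : LipschitzWith 1 F := by
    intro w₁ w₂
    have h1 : edist (F w₁) (F w₂) = edist (P w₁) (P w₂) := by
      rw [edist_dist, edist_dist, Subtype.dist_eq]
    rw [h1]
    calc edist (P w₁) (P w₂) ≤ ‖P‖₊ * edist w₁ w₂ := P.lipschitz w₁ w₂
      _ ≤ 1 * edist w₁ w₂ := by
          gcongr
          exact_mod_cast (by exact_mod_cast Submodule.orthogonalProjectionOnto_norm_le W :
            (‖P‖₊ : ℝ) ≤ ((1:ℝ≥0):ℝ))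
  have hFadd : ∀ w₁ w₂ : Eucl n, F (w₁ + w₂) = F w₁ + F w₂ := by
    intro w₁ w₂; simp [hF, _root_.map_add, Submodule.coe_add]
  have hFu : F u = 0 := by
    exact congrArg Subtype.val (Submodule.orthogonalProjectionOnto_apply_of_mem_orthogonal huW)
  have hFv : ∀ v : W, F (v : Eucl n) = (v : Eucl n) := by
    intro v
    simp [hF, P, ← Submodule.starProjection_apply, Submodule.starProjection_eq_self_iff.mpr v.2]
  -- the key claim: slices of the frontier
  set R : ℝ := ‖u‖ + ρ with hR
  have key : ∀ v : W, ‖(v : Eucl n)‖ < ρ →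
      F a + (v : Eucl n) ∈ F '' (Γ ∩ closedBall a R) := by
    intro v hv
    have hav : a + (v : Eucl n) ∈ (closure Ω)ᶜ := by
      rw [← interior_compl]
      apply hball_a
      simp only [mem_ball, dist_self_add_left]
      · exact lt_of_lt_of_le hv (min_le_left _ _)
    have hbv : b + (v : Eucl n) ∈ Ω := by
      apply hball_b
      simp only [mem_ball, dist_self_add_left]
      exact lt_of_lt_of_le hv (min_le_right _ _)
    have hseg : IsPreconnected (segment ℝ (a + (v:Eucl n)) (b + (v:Eucl n))) :=
      (convex_segment _ _).isPreconnected
    obtain ⟨g, hgseg, hgΓ⟩ := exists_mem_frontier_of_preconnected hseg hΩ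
      ⟨b + v, right_mem_segment _ _ _, hbv⟩ ⟨a + v, left_mem_segment _ _ _, hav⟩
    -- g = a + v + t u  for some t ∈ [0,1]
    rw [segment_eq_image] at hgseg
    obtain ⟨t, ht, hg⟩ := hgseg
    have hgform : g = a + (v : Eucl n) + t • u := by
      rw [← hg]; rw [hu_def]; module
    refine ⟨g, ⟨hgΓ, ?_⟩, ?_⟩
    · rw [mem_closedBall]
      have : g - a = (v : Eucl n) + t • u := by rw [hgform]; abel
      rw [dist_eq_norm, this]
      calc ‖(v : Eucl n) + t • u‖ ≤ ‖(v : Eucl n)‖ + ‖t • u‖ := norm_add_le _ _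
        _ ≤ ρ + ‖u‖ := by
            apply add_le_add hv.le
            rw [norm_smul, Real.norm_eq_abs, abs_of_nonneg ht.1]
            calc t * ‖u‖ ≤ 1 * ‖u‖ := by
                  apply mul_le_mul_of_nonneg_right ht.2 (norm_nonneg _)
              _ = ‖u‖ := one_mul _
        _ = R := by rw [hR]; ring
    · rw [hgform, hFadd, hFadd]
      have : F (t • u) = t • F u := by simp [hF, _root_.map_smul, Submodule.coe_smul]
      rw [this, hFu, smul_zero, add_zero, hFv]
  -- the measure-theoretic contradiction
  set m : ℝ := (n:ℝ) - 1 with hm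
  have hm0 : (0:ℝ) ≤ m := by
    rw [hm]; have h2n : (2:ℝ) ≤ n := by exact_mod_cast hn
    linarith
  have hrank : Module.finrank ℝ W = n - 1 := by
    have h2 := Submodule.finrank_add_finrank_orthogonal (K := (ℝ ∙ u)) (𝕜 := ℝ)
    rw [finrank_span_singleton hu, finrank_euclideanSpace_fin] at h2
    rw [hW]
    omega
  have hmcast : ((Module.finrank ℝ W : ℕ) : ℝ) = m := by
    rw [hrank, hm, Nat.cast_sub (by omega : 1 ≤ n), Nat.cast_one]
  set ψ : W → Eucl n := fun v => F a + (v : Eucl n) with hψ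
  have hψiso : Isometry ψ := Isometry.of_dist_eq (fun v w => by
    simp only [hψ]
    rw [dist_add_left, ← Subtype.dist_eq])
  have hsubA : ψ '' (ball (0 : W) ρ) ⊆ F '' (Γ ∩ closedBall a R) := by
    rintro _ ⟨v, hv, rfl⟩
    apply key v
    rw [mem_ball_zero_iff] at hv
    simpa using hv
  have hμA : 0 < μH[m] (ψ '' (ball (0 : W) ρ)) := by
    rw [hψiso.hausdorffMeasure_image (Or.inl hm0)]
    set e := (stdOrthonormalBasis ℝ W).repr
    have hball : e.symm '' (ball (0 : EuclideanSpace ℝ (Fin (Module.finrank ℝ W))) ρ)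
        = ball (0 : W) ρ := by
      have h := e.symm.toIsometryEquiv.image_ball
        (0 : EuclideanSpace ℝ (Fin (Module.finrank ℝ W))) ρ
      simpa using h
    rw [← hball, e.symm.isometry.hausdorffMeasure_image (Or.inl hm0)]
    have hpos := muH_ball_pos (Module.finrank ℝ W) (by rw [hrank]; omega) hρ
    rwa [hmcast] at hpos
  have hfin : μH[d] (Γ ∩ closedBall a R) ≠ ⊤ := (ahlfors_locally_finite hd0 hreg a R).ne
  have hzero : μH[m] (Γ ∩ closedBall a R) = 0 := by
    rcases MeasureTheory.Measure.hausdorffMeasure_zero_or_top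
      (show d < m by rw [hm]; exact hdn) (Γ ∩ closedBall a R) with h | h
    · exact h
    · exact absurd h hfin
  have hle : μH[m] (ψ '' (ball (0 : W) ρ)) ≤ 0 := by
    calc μH[m] (ψ '' (ball (0:W) ρ)) ≤ μH[m] (F '' (Γ ∩ closedBall a R)) :=
          measure_mono hsubA
      _ ≤ ((1:ℝ≥0) : ℝ≥0∞) ^ m * μH[m] (Γ ∩ closedBall a R) :=
          hFlip.hausdorffMeasure_image_le hm0 _
      _ = 0 := by rw [hzero, mul_zero]
  exact absurd hle (not_le.mpr hμA)

/-- The key scalar inequality contradiction for the corkscrew counting argument. -/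
lemma kappa_arith {n : ℕ} {d 𝒜 κ₀ s : ℝ} (hn : 2 ≤ n) (hd0 : 0 < d)
    (h𝒜 : 1 ≤ 𝒜) (hκ : 0 < κ₀) (hs : 0 < s)
    (hκsmall : κ₀ ^ ((n:ℝ) - d) < (𝒜^2)⁻¹ * (2:ℝ) ^ (-(2*(n:ℝ)+d)))
    (hineq : 𝒜⁻¹ * (κ₀*s) ^ d * (s/2) ^ n ≤ (2*(κ₀*s)) ^ n * (𝒜 * (2*s) ^ d)) :
    False := by
  have h𝒜pos : (0:ℝ) < 𝒜 := lt_of_lt_of_le one_pos h𝒜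
  set a1 : ℝ := κ₀ ^ d with ha1def
  set a2 : ℝ := κ₀ ^ ((n:ℝ) - d) with ha2def
  set S : ℝ := s ^ d with hSdef
  set Sn : ℝ := s ^ n with hSndef
  set T : ℝ := (2:ℝ) ^ n with hTdef
  set Td : ℝ := (2:ℝ) ^ d with hTddef
  have ha1 : 0 < a1 := Real.rpow_pos_of_pos hκ _
  have ha2 : 0 < a2 := Real.rpow_pos_of_pos hκ _
  have hS : 0 < S := Real.rpow_pos_of_pos hs _
  have hSn : 0 < Sn := by positivity
  have hT : (0:ℝ) < T := by positivity
  have hTd : 0 < Td := Real.rpow_pos_of_pos two_pos _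
  have e1 : (κ₀*s) ^ d = a1 * S := Real.mul_rpow hκ.le hs.le
  have e2 : (2*s) ^ d = Td * S := Real.mul_rpow (by norm_num) hs.le
  have e3 : (s/2) ^ n = Sn / T := div_pow s 2 n
  have e5 : a1 * a2 = κ₀ ^ n := by
    rw [ha1def, ha2def, ← Real.rpow_natCast κ₀ n, ← Real.rpow_add hκ]
    ring_nf
  have e4 : (2*(κ₀*s))^n = T * ((a1 * a2) * Sn) := by
    rw [e5, hTdef, hSndef]; ring
  rw [e1, e2, e3, e4] at hineq
  -- clear the division by T
  have h2 : 𝒜⁻¹ * (a1 * S * Sn) ≤ (T * T * Td * 𝒜 * a2) * (a1 * S * Sn) := by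
    have hmul := mul_le_mul_of_nonneg_right hineq hT.le
    calc 𝒜⁻¹ * (a1 * S * Sn) = 𝒜⁻¹ * (a1 * S) * (Sn / T) * T := by
          field_simp
        _ ≤ T * (a1 * a2 * Sn) * (𝒜 * (Td * S)) * T := hmul
        _ = (T * T * Td * 𝒜 * a2) * (a1 * S * Sn) := by ring
  have h3 : 𝒜⁻¹ ≤ T * T * Td * 𝒜 * a2 :=
    le_of_mul_le_mul_right (by linarith [h2]) (by positivity : (0:ℝ) < a1 * S * Sn)
  -- now compare with hκsmall
  have e6 : (𝒜^2)⁻¹ * (2:ℝ) ^ (-(2*(n:ℝ)+d)) ≤ a2 := by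
    have h7 : (2:ℝ) ^ (2*(n:ℝ)+d) = T * T * Td := by
      rw [show 2*(n:ℝ)+d = ((n:ℝ)+(n:ℝ))+d by ring, Real.rpow_add two_pos,
        Real.rpow_add two_pos, Real.rpow_natCast]
    rw [Real.rpow_neg (by norm_num), h7]
    rw [← mul_inv]
    rw [inv_eq_one_div, div_le_iff₀ (by positivity)]
    have h4 : 𝒜 * 𝒜⁻¹ ≤ 𝒜 * (T * T * Td * 𝒜 * a2) :=
      mul_le_mul_of_nonneg_left h3 h𝒜pos.le
    rw [mul_inv_cancel₀ (ne_of_gt h𝒜pos)] at h4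
    calc (1:ℝ) ≤ 𝒜 * (T * T * Td * 𝒜 * a2) := h4
      _ = a2 * (𝒜^2 * (T * T * Td)) := by ring
  exact absurd (lt_of_lt_of_le hκsmall e6) (lt_irrefl _)

/-- cf. `DavFM21`, Lemma 11.6: a domain whose boundary is `d`-Ahlfors
regular of lower dimension `d < n - 1` automatically satisfies the interior corkscrew
condition, with constant depending only on `n`, `d`, and `𝒜`. -/
theorem statement13
    (n : ℕ) (hn : 2 ≤ n) (d 𝒜 : ℝ) (hd0 : 0 < d) (hdn : d < (n : ℝ) - 1) (h𝒜 : 1 ≤ 𝒜) :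
    ∃ κ ∈ Set.Ioo (0:ℝ) 1,
      ∀ Ω : Set (Eucl n), IsOpen Ω → Ω.Nonempty → Ω ≠ Set.univ →
        AhlforsRegularWithin d 𝒜 (frontier Ω) (EMetric.diam (frontier Ω)) →
        CorkscrewCond κ Ω := by
  have h𝒜pos : (0:ℝ) < 𝒜 := lt_of_lt_of_le one_pos h𝒜
  have hn2 : (2:ℝ) ≤ (n:ℝ) := by exact_mod_cast hn
  set c : ℝ := (𝒜^2)⁻¹ * (2:ℝ) ^ (-(2*(n:ℝ)+d)) with hc_def
  have hc : 0 < c := by positivity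
  set p : ℝ := (n:ℝ) - d with hp_def
  have hp : 0 < p := by rw [hp_def]; linarith
  set κ₀ : ℝ := min (1/2) ((c/2) ^ p⁻¹) with hκ₀_def
  have hκ₀pos : 0 < κ₀ := lt_min (by norm_num) (Real.rpow_pos_of_pos (by positivity) _)
  have hκ₀half : κ₀ ≤ 1/2 := min_le_left _ _
  have hκ₀small : κ₀ ^ p < c := by
    calc κ₀ ^ p ≤ ((c/2) ^ p⁻¹) ^ p :=
          Real.rpow_le_rpow hκ₀pos.le (min_le_right _ _) hp.le
      _ = c/2 := by
          rw [← Real.rpow_mul (by positivity), inv_mul_cancel₀ hp.ne', Real.rpow_one]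
      _ < c := by linarith
  refine ⟨min (κ₀/8) (1/4), ⟨lt_min (by positivity) (by norm_num), ?_⟩, ?_⟩
  · calc min (κ₀/8) (1/4) ≤ 1/4 := min_le_right _ _
      _ < 1 := by norm_num
  intro Ω hΩopen hΩne hΩuniv hreg x hx r hr hrdiam
  set κ : ℝ := min (κ₀/8) (1/4) with hκ_def
  set Γ : Set (Eucl n) := frontier Ω with hΓ_def
  have hint : interior Ωᶜ = ∅ := interior_compl_empty hn hd0 hdn hΩopen hΩne hreg
  have hcompl : ∀ w : Eucl n, w ∉ Γ → w ∈ Ω := by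
    intro w hw
    by_contra hwΩ
    have hmem : w ∈ interior Ωᶜ := by
      have h1 : w ∈ Ωᶜ \ frontier Ωᶜ := ⟨hwΩ, by rwa [frontier_compl]⟩
      rwa [self_diff_frontier] at h1
    rw [hint] at hmem
    exact hmem
  have hκr : κ * r ≤ (κ₀/8) * r := mul_le_mul_of_nonneg_right (min_le_left _ _) hr.le
  have hκr4 : κ * r ≤ r/4 := by
    calc κ * r ≤ (1/4) * r := mul_le_mul_of_nonneg_right (min_le_right _ _) hr.le
      _ = r/4 := by ring
  rcases le_or_gt (EMetric.diam Γ) (ENNReal.ofReal (r/2)) with hcase | hcase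
  · -- Case I: the boundary is contained in a small ball around x
    have hΓsub : ∀ y ∈ Γ, dist x y ≤ r/2 := by
      intro y hy
      have h1 : edist x y ≤ ENNReal.ofReal (r/2) :=
        le_trans (EMetric.edist_le_diam_of_mem hx hy) hcase
      rw [edist_dist] at h1
      exact (ENNReal.ofReal_le_ofReal_iff (by linarith)).mp h1
    set e₀ : Eucl n := EuclideanSpace.single (⟨0, by omega⟩ : Fin n) (1:ℝ) with he₀
    have he₀norm : ‖e₀‖ = 1 := by rw [he₀, EuclideanSpace.norm_single]; norm_num
    refine ⟨x + (3*r/4) • e₀, ?_, ?_⟩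
    · rw [mem_ball, dist_self_add_left, norm_smul, he₀norm, Real.norm_eq_abs,
        abs_of_nonneg (by linarith)]
      linarith
    · intro w hw
      apply hcompl
      intro hwΓ
      have h1 : dist x w ≤ r/2 := hΓsub w hwΓ
      rw [mem_ball] at hw
      have h2 := dist_triangle (x + (3*r/4) • e₀) w x
      have h3 : dist (x + (3*r/4) • e₀) x = 3*r/4 := by
        rw [dist_self_add_left, norm_smul, he₀norm, Real.norm_eq_abs,
          abs_of_nonneg (by linarith)]
        ring
      rw [h3, dist_comm w x] at h2
      rw [dist_comm w _] at hw
      linarith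
  · -- Case II: the counting argument
    set s : ℝ := r/8 with hs_def
    have hs : 0 < s := by positivity
    set ε : ℝ := κ₀ * s with hε_def
    have hε : 0 < ε := by positivity
    have hεs : ε ≤ s/2 := by
      rw [hε_def]
      nlinarith
    have hεr2 : ε ≤ r/2 := by rw [hs_def] at hεs; linarith
    have hεdiam : ENNReal.ofReal ε < EMetric.diam Γ :=
      lt_of_le_of_lt (ENNReal.ofReal_le_ofReal hεr2) hcase
    have main : ∃ z ∈ ball x (s/2), ∀ y ∈ Γ, ¬ dist z y < ε := by
      by_contra hcon
      push_neg at hcon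
      set ν : Measure (Eucl n) := (sMeasure d Γ).restrict (ball x (r/4)) with hν_def
      have hr4diam : ENNReal.ofReal (r/4) < EMetric.diam Γ :=
        lt_of_le_of_lt (ENNReal.ofReal_le_ofReal (by linarith)) hcase
      have hν_univ : ν Set.univ ≤ ENNReal.ofReal (𝒜 * (r/4)^d) := by
        rw [hν_def, Measure.restrict_apply_univ]
        exact (hreg x hx (r/4) (by positivity) hr4diam).2
      haveI : IsFiniteMeasure ν := ⟨lt_of_le_of_lt hν_univ ofReal_lt_top⟩
      set B : Set (Eucl n) := ball x (s/2) with hB_def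
      have hlow : ∀ z ∈ B, ENNReal.ofReal (𝒜⁻¹ * ε^d) ≤ ν (ball z (2*ε)) := by
        intro z hz
        obtain ⟨y, hyΓ, hzy⟩ := hcon z hz
        have hsub : ball y ε ⊆ ball z (2*ε) ∩ ball x (r/4) := by
          intro w hw
          rw [mem_ball] at hw
          rw [hB_def, mem_ball] at hz
          constructor
          · rw [mem_ball]
            calc dist w z ≤ dist w y + dist y z := dist_triangle _ _ _
              _ < ε + ε := add_lt_add hw (by rwa [dist_comm])
              _ = 2*ε := by ring
          · rw [mem_ball]
            calc dist w x ≤ dist w y + dist y z + dist z x := dist_triangle4 _ _ _ _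
              _ < ε + ε + s/2 := by
                  have := (dist_comm z y) ▸ hzy
                  gcongr
              _ ≤ s/2 + s/2 + s/2 := by linarith
              _ < r/4 := by rw [hs_def]; linarith
        calc ENNReal.ofReal (𝒜⁻¹ * ε^d) ≤ sMeasure d Γ (ball y ε) :=
              (hreg y hyΓ ε hε hεdiam).1
          _ ≤ sMeasure d Γ (ball z (2*ε) ∩ ball x (r/4)) := measure_mono hsub
          _ = ν (ball z (2*ε)) := by
              rw [hν_def, Measure.restrict_apply measurableSet_ball]
      set U : Set (Eucl n × Eucl n) := {q | dist q.1 q.2 < 2*ε} with hU_def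
      have hUopen : IsOpen U := isOpen_lt (by fun_prop) continuous_const
      set f : Eucl n → Eucl n → ℝ≥0∞ :=
        fun z y => U.indicator (fun _ => (1:ℝ≥0∞)) (z,y) with hf_def
      have hf_meas : Measurable (Function.uncurry f) := by
        have huncurry : Function.uncurry f = U.indicator (fun _ => (1:ℝ≥0∞)) := by
          funext q
          simp [hf_def, Function.uncurry]
        rw [huncurry]
        exact measurable_const.indicator hUopen.measurableSet
      have hstep1 : ∀ z, ν (ball z (2*ε)) = ∫⁻ y, f z y ∂ν := by
        intro z
        have hfz : ∀ y, f z y = (ball z (2*ε)).indicator (fun _ => (1:ℝ≥0∞)) y := by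
          intro y
          classical
          simp only [hf_def, hU_def]
          rw [Set.indicator_apply, Set.indicator_apply]
          simp only [mem_setOf_eq, mem_ball]
          exact if_congr (by rw [dist_comm]) rfl rfl
        rw [lintegral_congr hfz, lintegral_indicator measurableSet_ball, setLIntegral_one]
      have hswap : ∫⁻ z in B, ∫⁻ y, f z y ∂ν ∂volume = ∫⁻ y, ∫⁻ z in B, f z y ∂volume ∂ν :=
        lintegral_lintegral_swap hf_meas.aemeasurable
      have hinner : ∀ y, ∫⁻ z in B, f z y ∂volume ≤ volume (ball (0:Eucl n) (2*ε)) := by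
        intro y
        have hfz : ∀ z, f z y = (ball y (2*ε)).indicator (fun _ => (1:ℝ≥0∞)) z := by
          intro z
          classical
          simp only [hf_def, hU_def]
          rw [Set.indicator_apply, Set.indicator_apply]
          simp only [mem_setOf_eq, mem_ball]
        calc ∫⁻ z in B, f z y ∂volume
            = ∫⁻ z in B, (ball y (2*ε)).indicator (fun _ => (1:ℝ≥0∞)) z ∂volume :=
              lintegral_congr hfz
          _ = (volume.restrict B) (ball y (2*ε)) := by
              rw [lintegral_indicator measurableSet_ball, setLIntegral_one]
          _ ≤ volume (ball y (2*ε)) := by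
              rw [Measure.restrict_apply measurableSet_ball]
              exact measure_mono inter_subset_left
          _ = volume (ball (0:Eucl n) (2*ε)) := Measure.addHaar_ball_center volume y (2*ε)
      have hVpos : 0 < volume (ball (0:Eucl n) 1) := measure_ball_pos _ _ one_pos
      have hVfin : volume (ball (0:Eucl n) 1) < ⊤ := measure_ball_lt_top
      have chain : ENNReal.ofReal (𝒜⁻¹ * ε^d) * volume B ≤
          volume (ball (0:Eucl n) (2*ε)) * ENNReal.ofReal (𝒜 * (r/4)^d) := by
        calc ENNReal.ofReal (𝒜⁻¹ * ε^d) * volume B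
            = ∫⁻ _ in B, ENNReal.ofReal (𝒜⁻¹ * ε^d) ∂volume := (setLIntegral_const _ _).symm
          _ ≤ ∫⁻ z in B, ν (ball z (2*ε)) ∂volume := setLIntegral_mono' measurableSet_ball hlow
          _ = ∫⁻ z in B, ∫⁻ y, f z y ∂ν ∂volume := lintegral_congr fun z => hstep1 z
          _ = ∫⁻ y, ∫⁻ z in B, f z y ∂volume ∂ν := hswap
          _ ≤ ∫⁻ _, volume (ball (0:Eucl n) (2*ε)) ∂ν := lintegral_mono hinner
          _ = volume (ball (0:Eucl n) (2*ε)) * ν Set.univ := lintegral_const _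
          _ ≤ volume (ball (0:Eucl n) (2*ε)) * ENNReal.ofReal (𝒜 * (r/4)^d) :=
              mul_le_mul_right hν_univ _
      have hn_rank : Module.finrank ℝ (Eucl n) = n := finrank_euclideanSpace_fin
      have hvol1 : volume B = ENNReal.ofReal ((s/2)^n) * volume (ball (0:Eucl n) 1) := by
        rw [hB_def, Measure.addHaar_ball_of_pos volume x (by positivity : (0:ℝ) < s/2), hn_rank]
      have hvol2 : volume (ball (0:Eucl n) (2*ε)) =
          ENNReal.ofReal ((2*ε)^n) * volume (ball (0:Eucl n) 1) := by
        rw [Measure.addHaar_ball_of_pos volume _ (by positivity : (0:ℝ) < 2*ε), hn_rank]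
      rw [hvol1, hvol2] at chain
      have hchain2 : (ENNReal.ofReal (𝒜⁻¹ * ε^d) * ENNReal.ofReal ((s/2)^n)) *
            volume (ball (0:Eucl n) 1) ≤
          (ENNReal.ofReal ((2*ε)^n) * ENNReal.ofReal (𝒜 * (r/4)^d)) *
            volume (ball (0:Eucl n) 1) := by
        calc ENNReal.ofReal (𝒜⁻¹ * ε^d) * ENNReal.ofReal ((s/2)^n) * volume (ball (0:Eucl n) 1)
            = ENNReal.ofReal (𝒜⁻¹ * ε^d) * (ENNReal.ofReal ((s/2)^n) * volume (ball (0:Eucl n) 1)) := by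
              ring
          _ ≤ ENNReal.ofReal ((2*ε)^n) * volume (ball (0:Eucl n) 1) * ENNReal.ofReal (𝒜 * (r/4)^d) :=
              chain
          _ = ENNReal.ofReal ((2*ε)^n) * ENNReal.ofReal (𝒜 * (r/4)^d) * volume (ball (0:Eucl n) 1) := by
              ring
      have hreal : 𝒜⁻¹ * ε^d * (s/2)^n ≤ (2*ε)^n * (𝒜 * (r/4)^d) := by
        have h := (ENNReal.mul_le_mul_iff_left hVpos.ne' hVfin.ne).mp hchain2
        rw [← ENNReal.ofReal_mul (by positivity : (0:ℝ) ≤ 𝒜⁻¹ * ε^d),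
          ← ENNReal.ofReal_mul (by positivity : (0:ℝ) ≤ (2*ε)^n)] at h
        exact (ENNReal.ofReal_le_ofReal_iff (by positivity)).mp h
      have hr4 : r/4 = 2*s := by rw [hs_def]; ring
      rw [hε_def, hr4] at hreal
      exact kappa_arith hn hd0 h𝒜 hκ₀pos hs hκ₀small hreal
    obtain ⟨z, hzball, hzfar⟩ := main
    refine ⟨z, ?_, ?_⟩
    · rw [mem_ball] at hzball ⊢
      calc dist z x < s/2 := hzball
        _ < r := by rw [hs_def]; linarith
    · intro w hw
      apply hcompl
      intro hwΓ
      apply hzfar w hwΓ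
      rw [mem_ball] at hw
      rw [dist_comm]
      calc dist w z < κ * r := hw
        _ ≤ (κ₀/8) * r := hκr
        _ = ε := by rw [hε_def, hs_def]; ring


end
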